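/- Let ℓ, χ be formal power series in one variable X with ℓ(0)=1, satisfying 2X χ' - χ = e·ℓ with e ≠ 0. Then for every positive integer m, the coefficient of X^m in ℓ·χ^{2m-1} is zero. -/

import Mathlib

open PowerSeries

theorem aux_pow_deriv (χ : PowerSeries ℝ) (k : ℕ) :
    (χ ^ k).derivativeFun = (k : PowerSeries ℝ) * (χ ^ (k - 1) * χ.derivativeFun) := by
  have h := Derivation.leibniz_pow (PowerSeries.derivative ℝ) (a := χ) k
  rw [show PowerSeries.derivative ℝ (χ ^ k) = (χ ^ k).derivativeFun from rfl,
    show PowerSeries.derivative ℝ χ = χ.derivativeFun from rfl] at h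
  rw [h, nsmul_eq_mul, smul_eq_mul]

/-- Key combinatorial lemma of Case 10 of the `(2:-1:1)` analysis: if the formal power
series `ℓ, χ` satisfy `2X χ' - χ = e ℓ` with `ℓ(0) = 1` and `e ≠ 0`, then for every
`m ≥ 1` the coefficient of `X^m` in `ℓ χ^{2m-1}` vanishes. -/
theorem stmt11 (e : ℝ) (he : e ≠ 0) (ℓ χ : PowerSeries ℝ)
    (hℓ : constantCoeff ℓ = 1)
    (heq : 2 • (PowerSeries.X * χ.derivativeFun) - χ = PowerSeries.C e * ℓ) :
    ∀ m : ℕ, 0 < m → coeff m (ℓ * χ ^ (2 * m - 1)) = 0 := by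
  intro m hm
  obtain ⟨k, hk⟩ : ∃ k, m = k + 1 := ⟨m - 1, by omega⟩
  set n := 2 * m - 1 with hn
  have h2m : 2 * m = n + 1 := by omega
  simp only [nsmul_eq_mul, Nat.cast_ofNat] at heq
  have hχ : χ * χ ^ n = χ ^ (2 * m) := by rw [h2m, pow_succ]; ring
  have hF : (χ ^ (2 * m)).derivativeFun
      = (2 * (m : PowerSeries ℝ)) * (χ ^ n * χ.derivativeFun) := by
    have h := aux_pow_deriv χ (2 * m)
    rw [← hn] at h
    rw [h]; push_cast; ring
  have key : (m : PowerSeries ℝ) * (PowerSeries.C e * (ℓ * χ ^ n))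
      = PowerSeries.X * (χ ^ (2 * m)).derivativeFun - (m : PowerSeries ℝ) * χ ^ (2 * m) := by
    calc (m : PowerSeries ℝ) * (PowerSeries.C e * (ℓ * χ ^ n))
        = (m : PowerSeries ℝ) * ((PowerSeries.C e * ℓ) * χ ^ n) := by ring
      _ = (m : PowerSeries ℝ) * ((2 * (PowerSeries.X * χ.derivativeFun) - χ) * χ ^ n) := by
          rw [← heq]
      _ = PowerSeries.X * ((2 * (m : PowerSeries ℝ)) * (χ ^ n * χ.derivativeFun))
            - (m : PowerSeries ℝ) * (χ * χ ^ n) := by ring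
      _ = _ := by rw [hF, hχ]
  have hc := congrArg (coeff m) key
  have hcm : coeff m ((m : PowerSeries ℝ) * (PowerSeries.C e * (ℓ * χ ^ n)))
      = (m : ℝ) * (e * coeff m (ℓ * χ ^ n)) := by
    rw [← map_natCast PowerSeries.C m, ← mul_assoc, ← map_mul, coeff_C_mul]; ring
  have hXd : coeff m (PowerSeries.X * (χ ^ (2 * m)).derivativeFun)
      = (m : ℝ) * coeff m (χ ^ (2 * m)) := by
    rw [hk, coeff_succ_X_mul, show (χ ^ (2 * (k + 1))).derivativeFun = PowerSeries.derivative ℝ (χ ^ (2 * (k + 1))) from rfl, coeff_derivative]; push_cast; ring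
  have hmF : coeff m ((m : PowerSeries ℝ) * χ ^ (2 * m))
      = (m : ℝ) * coeff m (χ ^ (2 * m)) := by
    rw [← map_natCast PowerSeries.C m, coeff_C_mul]
  rw [hcm, map_sub, hXd, hmF, sub_self] at hc
  have hm0 : (m : ℝ) ≠ 0 := Nat.cast_ne_zero.mpr (by omega)
  have h1 : e * coeff m (ℓ * χ ^ n) = 0 := (mul_eq_zero.mp hc).resolve_left hm0
  exact (mul_eq_zero.mp h1).resolve_left he
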